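/- If for every ε ∈ (0,1), E[|Γ^ε_A(x)|] ≤ E[|Γ^ε_B(x)|], then E[Σ_y p_A(x,y)] ≤ E[Σ_y p_B(x,y)]. That is, N-optimality of an idealized conformity measure implies its S-optimality. -/

import Mathlib

open MeasureTheory

lemma key1 {p : ℝ} (h0 : 0 ≤ p) (h1 : p ≤ 1) :
    ∫ ε in Set.Ioo (0:ℝ) 1, (if p > ε then (1:ℝ) else 0) = p := by
  have heq : (fun ε : ℝ => if p > ε then (1:ℝ) else 0)
      = Set.indicator (Set.Iio p) (fun _ => (1:ℝ)) := by
    funext ε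
    simp [Set.indicator_apply, Set.mem_Iio, gt_iff_lt]
  rw [heq, setIntegral_indicator measurableSet_Iio]
  have hset : Set.Ioo (0:ℝ) 1 ∩ Set.Iio p = Set.Ioo 0 p := by
    ext x
    constructor
    · rintro ⟨⟨hx0, _⟩, hxp⟩; exact ⟨hx0, hxp⟩
    · rintro ⟨hx0, hxp⟩; exact ⟨⟨hx0, lt_of_lt_of_le hxp h1⟩, hxp⟩
  rw [hset]
  simp [Real.volume_Ioo, ENNReal.toReal_ofReal h0, h0]

lemma rep {Ω Y : Type*} [MeasurableSpace Ω] [Fintype Y]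
    (μ : Measure Ω) [IsProbabilityMeasure μ]
    (p : Ω → Y → ℝ)
    (h : ∀ ω y, p ω y ∈ Set.Icc (0:ℝ) 1)
    (hm : ∀ y, Measurable fun ω => p ω y) :
    (∫ ω, (∑ y : Y, p ω y) ∂μ
      = ∫ ε in Set.Ioo (0:ℝ) 1,
          ∫ ω, ((Finset.univ.filter (fun y => p ω y > ε)).card : ℝ) ∂μ)
    ∧ Integrable (fun ε => ∫ ω, ((Finset.univ.filter (fun y => p ω y > ε)).card : ℝ) ∂μ)
        (volume.restrict (Set.Ioo (0:ℝ) 1)) := by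
  set ν := volume.restrict (Set.Ioo (0:ℝ) 1) with hν
  haveI : IsFiniteMeasure ν := by
    constructor
    rw [hν, Measure.restrict_apply_univ, Real.volume_Ioo]
    simp
  -- measurability of the uncurried function
  have hmeas : Measurable (fun q : Ω × ℝ =>
      ((Finset.univ.filter (fun y => p q.1 y > q.2)).card : ℝ)) := by
    have : (fun q : Ω × ℝ => ((Finset.univ.filter (fun y => p q.1 y > q.2)).card : ℝ))
        = fun q => ∑ y : Y, (if p q.1 y > q.2 then (1:ℝ) else 0) := by
      funext q
      rw [Finset.sum_boole]
    rw [this]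
    refine Finset.measurable_sum _ (fun y _ => ?_)
    have hset : MeasurableSet {q : Ω × ℝ | p q.1 y > q.2} :=
      measurableSet_lt measurable_snd ((hm y).comp measurable_fst)
    exact Measurable.ite hset measurable_const measurable_const
  have hF : Integrable (fun q : Ω × ℝ =>
      ((Finset.univ.filter (fun y => p q.1 y > q.2)).card : ℝ)) (μ.prod ν) := by
    refine ⟨hmeas.aestronglyMeasurable, ?_⟩
    refine HasFiniteIntegral.of_bounded (C := (Fintype.card Y : ℝ)) (ae_of_all _ fun q => ?_)
    rw [Real.norm_eq_abs, abs_of_nonneg (by positivity)]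
    exact_mod_cast Finset.card_filter_le _ _
  constructor
  · have hpt : ∀ ω, (∑ y : Y, p ω y)
        = ∫ ε in Set.Ioo (0:ℝ) 1, ((Finset.univ.filter (fun y => p ω y > ε)).card : ℝ) := by
      intro ω
      have : (fun ε : ℝ => ((Finset.univ.filter (fun y => p ω y > ε)).card : ℝ))
          = fun ε => ∑ y : Y, (if p ω y > ε then (1:ℝ) else 0) := by
        funext ε; rw [Finset.sum_boole]
      rw [this, integral_finset_sum]
      · exact (Finset.sum_congr rfl fun y _ => (key1 (h ω y).1 (h ω y).2).symm)
      · intro y _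
        have : (fun ε : ℝ => if p ω y > ε then (1:ℝ) else 0)
            = Set.indicator (Set.Iio (p ω y)) (fun _ => (1:ℝ)) := by
          funext ε; simp [Set.indicator_apply, Set.mem_Iio, gt_iff_lt]
        rw [this]
        exact (((integrableOn_const_iff (C := (1:ℝ))).mpr (Or.inr (by
          rw [Real.volume_Ioo]; simp))).indicator measurableSet_Iio)
    calc ∫ ω, (∑ y : Y, p ω y) ∂μ
        = ∫ ω, ∫ ε, ((Finset.univ.filter (fun y => p ω y > ε)).card : ℝ) ∂ν ∂μ := by
          exact integral_congr_ae (ae_of_all _ fun ω => hpt ω)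
      _ = ∫ ε, ∫ ω, ((Finset.univ.filter (fun y => p ω y > ε)).card : ℝ) ∂μ ∂ν :=
          integral_integral_swap hF
  · exact hF.integral_prod_right

theorem stmt_6 {Ω Y : Type*} [MeasurableSpace Ω] [Fintype Y]
    (μ : Measure Ω) [IsProbabilityMeasure μ]
    (pA pB : Ω → Y → ℝ)
    (hA : ∀ ω y, pA ω y ∈ Set.Icc (0:ℝ) 1)
    (hB : ∀ ω y, pB ω y ∈ Set.Icc (0:ℝ) 1)
    (hmA : ∀ y, Measurable fun ω => pA ω y)
    (hmB : ∀ y, Measurable fun ω => pB ω y)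
    (hN : ∀ ε ∈ Set.Ioo (0:ℝ) 1,
      ∫ ω, ((Finset.univ.filter (fun y => pA ω y > ε)).card : ℝ) ∂μ
        ≤ ∫ ω, ((Finset.univ.filter (fun y => pB ω y > ε)).card : ℝ) ∂μ) :
    ∫ ω, (∑ y : Y, pA ω y) ∂μ ≤ ∫ ω, (∑ y : Y, pB ω y) ∂μ := by
  obtain ⟨hArep, hAint⟩ := rep μ pA hA hmA
  obtain ⟨hBrep, hBint⟩ := rep μ pB hB hmB
  rw [hArep, hBrep]
  exact setIntegral_mono_on hAint hBint measurableSet_Ioo hN
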